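/- arXiv:2408.00542 — 6 statements merged into one kernel-verified Lean document; each statement's English description precedes it below -/
import Mathlib

section
/- Let F be a field, let C ⊆ F^n be a linear subspace (a linear code of length n), and let T be a natural number. Suppose that every nonzero vector v in the dual code C^⊥ = {v ∈ F^n : ∑_{i} v_i c_i = 0 for all c ∈ C} has Hamming weight strictly greater than T. Then for every subset 𝒯 ⊆ {1,…,n} with |𝒯| = T, the coordinate projection of C onto the coordinates in 𝒯 is all of F^𝒯; that is, for every w : 𝒯 → F there exists c ∈ C with c_i = w_i for all i ∈ 𝒯. -/
/-- If every nonzero vector of the dual code of `C ⊆ F^n` has Hamming weight `> T`, then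
the projection of `C` onto any `T` coordinates is surjective. -/
theorem proj_surjective_of_dual_dist {F : Type*} [Field F] [DecidableEq F] {n : ℕ}
    (C : Submodule F (Fin n → F)) (T : ℕ)
    (hdual : ∀ v : Fin n → F, (∀ c ∈ C, ∑ i, v i * c i = 0) → v ≠ 0 → T < hammingNorm v)
    (𝒯 : Finset (Fin n)) (h𝒯 : 𝒯.card = T) (w : Fin n → F) :
    ∃ c ∈ C, ∀ i ∈ 𝒯, c i = w i := by
  classical
  set π : (Fin n → F) →ₗ[F] ({x // x ∈ 𝒯} → F) :=
    LinearMap.funLeft F F (fun j : {x // x ∈ 𝒯} => (j : Fin n)) with hπ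
  set W : Submodule F ({x // x ∈ 𝒯} → F) := C.map π with hW
  have hWtop : W = ⊤ := by
    by_contra hne
    obtain ⟨f, hf0, hfbot⟩ := W.exists_dual_map_eq_bot_of_lt_top (lt_top_iff_ne_top.2 hne)
      inferInstance
    set v : Fin n → F := fun i => if h : i ∈ 𝒯 then f (Pi.single (⟨i, h⟩ : {x // x ∈ 𝒯}) 1) else 0
      with hv
    have hvs : ∀ j : {x // x ∈ 𝒯}, v (j : Fin n) = f (Pi.single j 1) := by
      intro j
      simp [hv, j.2]
    have hsum : ∀ x : Fin n → F, ∑ i, v i * x i = f (π x) := by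
      intro x
      rw [f.pi_apply_eq_sum_univ (π x)]
      rw [← Finset.sum_subset (Finset.subset_univ 𝒯) (by intro i _ hi; simp [hv, hi])]
      rw [← Finset.sum_attach 𝒯 (fun i => v i * x i)]
      refine Finset.sum_congr rfl fun j _ => ?_
      have hsingle : (fun j' => if j = j' then (1:F) else 0) = Pi.single j (1:F) := by
        ext j'; simp [Pi.single_apply, eq_comm]
      rw [hsingle, ← hvs j, hπ]
      simp [LinearMap.funLeft, mul_comm]
    have hvC : ∀ c ∈ C, ∑ i, v i * c i = 0 := by
      intro c hc
      rw [hsum c]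
      have : π c ∈ W := Submodule.mem_map_of_mem hc
      have := Submodule.mem_map_of_mem (f := f) this
      rw [hfbot] at this
      exact (Submodule.mem_bot F).1 this
    have hvne : v ≠ 0 := by
      intro h0
      apply hf0
      apply LinearMap.ext
      intro y
      rw [f.pi_apply_eq_sum_univ y, LinearMap.zero_apply]
      refine Finset.sum_eq_zero fun j _ => ?_
      have hvj : v (j : Fin n) = 0 := by rw [h0]; rfl
      rw [hvs j] at hvj
      have hsingle : (fun j' => if j = j' then (1:F) else 0) = Pi.single j (1:F) := by
        ext j'; simp [Pi.single_apply, eq_comm]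
      rw [hsingle, hvj, smul_zero]
    have hle : hammingNorm v ≤ T := by
      rw [← h𝒯]
      apply Finset.card_le_card
      intro i hi
      simp only [hammingNorm, Finset.mem_filter] at hi
      by_contra hmem
      exact hi.2 (by simp [hv, hmem])
    exact absurd (hdual v hvC hvne) (not_lt.2 hle)
  have : π w ∈ W := hWtop ▸ Submodule.mem_top
  obtain ⟨c, hc, hcw⟩ := this
  refine ⟨c, hc, fun i hi => ?_⟩
  have := congrFun hcw ⟨i, hi⟩
  simpa [hπ, LinearMap.funLeft] using this
end

section
/- (General cross-subspace alignment noise containment.) Let F be a field and let X ≥ 1, T ≥ 1, L ≥ 1 and Δ ≥ 1 be natural numbers. Let h ∈ F[x] have degree L, and for each ℓ ∈ {1,…,L} let h_ℓ, k_ℓ ∈ F[x] satisfy h = h_ℓ·k_ℓ with deg(k_ℓ) ≤ Δ. Let f_ℓ, g_ℓ ∈ F be scalars, let a_ℓ ∈ F[x] have degree < X, and let b_ℓ ∈ F[x] have degree < T. Define the shares f̂_ℓ = f_ℓ + k_ℓ·a_ℓ and ĝ_ℓ = g_ℓ·h_ℓ + h·b_ℓ. Then ∑_{ℓ=1}^{L}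 f̂_ℓ·ĝ_ℓ − ∑_{ℓ=1}^{L} f_ℓ·g_ℓ·h_ℓ lies in h·F[x]^{<X+T−1+Δ}; that is, there exists c ∈ F[x] of degree < X + T − 1 + Δ with ∑_ℓ f̂_ℓ ĝ_ℓ = ∑_ℓ f_ℓ g_ℓ h_ℓ + h·c. -/
open Polynomial

/-- General cross-subspace alignment noise containment: with shares
`f̂_ℓ = f_ℓ + k_ℓ a_ℓ` and `ĝ_ℓ = g_ℓ h_ℓ + h b_ℓ`, where `h = h_ℓ k_ℓ`, `deg k_ℓ ≤ Δ`,
`deg a_ℓ < X`, `deg b_ℓ < T`, the sum of products of shares equals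
`∑ f_ℓ g_ℓ h_ℓ + h c` with `deg c < X + T - 1 + Δ`. -/
theorem csa_noise_containment {F : Type*} [Field F] {X T L Δ : ℕ}
    (hX : 1 ≤ X) (hT : 1 ≤ T) (hL : 1 ≤ L) (hΔ : 1 ≤ Δ)
    (h : F[X]) (hdeg : h.degree = L)
    (hl kl : Fin L → F[X])
    (hfac : ∀ ℓ, h = hl ℓ * kl ℓ) (hkdeg : ∀ ℓ, (kl ℓ).degree ≤ (Δ : ℕ))
    (f g : Fin L → F) (a b : Fin L → F[X])
    (ha : ∀ ℓ, (a ℓ).degree < (X : ℕ)) (hb : ∀ ℓ, (b ℓ).degree < (T : ℕ)) :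
    ∃ c : F[X], c.degree < ((X + T - 1 + Δ : ℕ) : ℕ) ∧
      ∑ ℓ, (C (f ℓ) + kl ℓ * a ℓ) * (C (g ℓ) * hl ℓ + h * b ℓ)
        = ∑ ℓ, C (f ℓ * g ℓ) * hl ℓ + h * c := by
  set N := X + T - 1 + Δ with hN
  refine ⟨∑ ℓ, (C (f ℓ) * b ℓ + C (g ℓ) * a ℓ + kl ℓ * (a ℓ * b ℓ)), ?_, ?_⟩
  · refine lt_of_le_of_lt (degree_sum_le _ _) ?_
    have hbot : (⊥ : WithBot ℕ) < ((N : ℕ) : WithBot ℕ) := by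
      exact_mod_cast WithBot.bot_lt_coe N
    rw [Finset.sup_lt_iff hbot]
    intro ℓ _
    have hXN : ((X : ℕ) : WithBot ℕ) ≤ ((N : ℕ) : WithBot ℕ) := by
      exact_mod_cast (show X ≤ N by omega)
    have hTN : ((T : ℕ) : WithBot ℕ) ≤ ((N : ℕ) : WithBot ℕ) := by
      exact_mod_cast (show T ≤ N by omega)
    have hCb : (C (f ℓ) * b ℓ).degree ≤ (b ℓ).degree :=
      (degree_mul_le _ _).trans (by simpa using add_le_add_left (degree_C_le) (b ℓ).degree)
    have hCa : (C (g ℓ) * a ℓ).degree ≤ (a ℓ).degree :=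
      (degree_mul_le _ _).trans (by simpa using add_le_add_left (degree_C_le) (a ℓ).degree)
    have h1 : (C (f ℓ) * b ℓ).degree < (N : ℕ) :=
      lt_of_le_of_lt hCb (lt_of_lt_of_le (hb ℓ) hTN)
    have h2 : (C (g ℓ) * a ℓ).degree < (N : ℕ) :=
      lt_of_le_of_lt hCa (lt_of_lt_of_le (ha ℓ) hXN)
    have h3 : (kl ℓ * (a ℓ * b ℓ)).degree < (N : ℕ) := by
      rcases eq_or_ne (a ℓ) 0 with h0 | h0
      · simpa [h0] using hbot
      rcases eq_or_ne (b ℓ) 0 with h0' | h0'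
      · simpa [h0'] using hbot
      have hda : (a ℓ).degree ≤ ((X - 1 : ℕ) : WithBot ℕ) := by
        rw [degree_eq_natDegree h0]
        exact_mod_cast Nat.le_pred_of_lt ((natDegree_lt_iff_degree_lt h0).mpr (ha ℓ))
      have hdb : (b ℓ).degree ≤ ((T - 1 : ℕ) : WithBot ℕ) := by
        rw [degree_eq_natDegree h0']
        exact_mod_cast Nat.le_pred_of_lt ((natDegree_lt_iff_degree_lt h0').mpr (hb ℓ))
      calc (kl ℓ * (a ℓ * b ℓ)).degree
          ≤ (kl ℓ).degree + ((a ℓ).degree + (b ℓ).degree) :=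
            le_trans (degree_mul_le _ _) (add_le_add_right (degree_mul_le _ _) _)
        _ ≤ ((Δ : ℕ) : WithBot ℕ) + (((X - 1 : ℕ) : WithBot ℕ) + ((T - 1 : ℕ) : WithBot ℕ)) :=
            add_le_add (hkdeg ℓ) (add_le_add hda hdb)
        _ = ((Δ + (X - 1) + (T - 1) : ℕ) : WithBot ℕ) := by push_cast; ring
        _ < (N : ℕ) := by exact_mod_cast (show Δ + (X - 1) + (T - 1) < N by omega)
    calc (C (f ℓ) * b ℓ + C (g ℓ) * a ℓ + kl ℓ * (a ℓ * b ℓ)).degree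
        ≤ max (max (C (f ℓ) * b ℓ).degree (C (g ℓ) * a ℓ).degree)
            (kl ℓ * (a ℓ * b ℓ)).degree :=
          le_trans (degree_add_le _ _) (max_le_max (degree_add_le _ _) le_rfl)
      _ < (N : ℕ) := by
          simp only [max_lt_iff]
          exact ⟨⟨h1, h2⟩, h3⟩
  · rw [Finset.mul_sum, ← Finset.sum_add_distrib]
    refine Finset.sum_congr rfl fun ℓ _ => ?_
    rw [hfac ℓ, map_mul]
    ring
end

section
/- (Noise containment for the CSA construction on the projective line.) Let F be a field, X ≥ 1, T ≥ 1, L ≥ 1, and let γ_1, …, γ_L ∈ F be pairwise distinct. Set h = ∏_{ℓ=1}^{L}(x − γ_ℓ) and h_ℓ = ∏_{ℓ' ≠ ℓ}(x − γ_{ℓ'}). Let f_ℓ, g_ℓ ∈ F be scalars, let a_ℓ ∈ F[x] have degree < X and b_ℓ ∈ F[x] have degree < T, and define f̂_ℓ = f_ℓ + (x − γ_ℓ)·a_ℓ and ĝ_ℓ = g_ℓ·h_ℓ + h·b_ℓ. Then there exists a polynomial c ∈ F[x] of degree < X + T such that ∑_{ℓ=1}^{L} f̂_ℓ·ĝ_ℓ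 = ∑_{ℓ=1}^{L} f_ℓ·g_ℓ·h_ℓ + h·c. In particular ∑_ℓ f̂_ℓ ĝ_ℓ has degree < L + X + T. -/
open Polynomial

/-- Noise containment for the CSA construction on the projective line:
with `h = ∏_ℓ (x - γ_ℓ)`, `h_ℓ = ∏_{ℓ' ≠ ℓ} (x - γ_{ℓ'})`, shares
`f̂_ℓ = f_ℓ + (x - γ_ℓ) a_ℓ` (`deg a_ℓ < X`) and `ĝ_ℓ = g_ℓ h_ℓ + h b_ℓ` (`deg b_ℓ < T`),
there is `c` with `deg c < X + T` and `∑ f̂_ℓ ĝ_ℓ = ∑ f_ℓ g_ℓ h_ℓ + h c`; in particular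
`∑ f̂_ℓ ĝ_ℓ` has degree `< L + X + T`. -/
theorem csa_projective_line_noise_containment {F : Type*} [Field F] {X T L : ℕ}
    (hX : 1 ≤ X) (hT : 1 ≤ T) (hL : 1 ≤ L)
    (γ : Fin L → F) (hγ : Function.Injective γ)
    (f g : Fin L → F) (a b : Fin L → F[X])
    (ha : ∀ ℓ, (a ℓ).degree < (X : ℕ)) (hb : ∀ ℓ, (b ℓ).degree < (T : ℕ)) :
    (∃ c : F[X], c.degree < ((X + T : ℕ) : WithBot ℕ) ∧
      ∑ ℓ, (C (f ℓ) + (Polynomial.X - C (γ ℓ)) * a ℓ)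
          * (C (g ℓ) * (∏ ℓ' ∈ Finset.univ.erase ℓ, (Polynomial.X - C (γ ℓ')))
              + (∏ ℓ', (Polynomial.X - C (γ ℓ'))) * b ℓ)
        = ∑ ℓ, C (f ℓ * g ℓ) * (∏ ℓ' ∈ Finset.univ.erase ℓ, (Polynomial.X - C (γ ℓ')))
            + (∏ ℓ', (Polynomial.X - C (γ ℓ'))) * c) ∧
    (∑ ℓ, (C (f ℓ) + (Polynomial.X - C (γ ℓ)) * a ℓ)
          * (C (g ℓ) * (∏ ℓ' ∈ Finset.univ.erase ℓ, (Polynomial.X - C (γ ℓ')))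
              + (∏ ℓ', (Polynomial.X - C (γ ℓ'))) * b ℓ)).degree
      < ((L + X + T : ℕ) : WithBot ℕ) := by
  set h : F[X] := ∏ ℓ', (Polynomial.X - C (γ ℓ'))
  set c : F[X] := ∑ ℓ, (C (f ℓ) * b ℓ + C (g ℓ) * a ℓ + (Polynomial.X - C (γ ℓ)) * (a ℓ * b ℓ)) with hc
  have hdegh : h.degree = (L : ℕ) := by
    simp [h, degree_prod, degree_X_sub_C]
  have hha : ∀ ℓ, (a ℓ).degree ≤ ((X - 1 : ℕ) : WithBot ℕ) := by
    intro ℓ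
    rcases eq_or_ne (a ℓ) 0 with h0 | h0
    · simp [h0]
    · rw [degree_eq_natDegree h0, Nat.cast_le]
      have := (natDegree_lt_iff_degree_lt h0).mpr (ha ℓ)
      omega
  have hhb : ∀ ℓ, (b ℓ).degree ≤ ((T - 1 : ℕ) : WithBot ℕ) := by
    intro ℓ
    rcases eq_or_ne (b ℓ) 0 with h0 | h0
    · simp [h0]
    · rw [degree_eq_natDegree h0, Nat.cast_le]
      have := (natDegree_lt_iff_degree_lt h0).mpr (hb ℓ)
      omega
  have hcdeg : c.degree < ((X + T : ℕ) : WithBot ℕ) := by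
    refine lt_of_le_of_lt (degree_sum_le _ _) ?_
    rw [Finset.sup_lt_iff (by exact_mod_cast WithBot.bot_lt_coe _)]
    intro ℓ _
    refine lt_of_le_of_lt (degree_add_le _ _) ?_
    rw [max_lt_iff]
    constructor
    · refine lt_of_le_of_lt (degree_add_le _ _) ?_
      rw [max_lt_iff]
      constructor
      · refine lt_of_le_of_lt (degree_mul_le _ _) ?_
        calc (C (f ℓ)).degree + (b ℓ).degree ≤ 0 + ((T-1:ℕ):WithBot ℕ) :=
              add_le_add degree_C_le (hhb ℓ)
          _ < ((X+T:ℕ):WithBot ℕ) := by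
              rw [zero_add]; exact_mod_cast by omega
      · refine lt_of_le_of_lt (degree_mul_le _ _) ?_
        calc (C (g ℓ)).degree + (a ℓ).degree ≤ 0 + ((X-1:ℕ):WithBot ℕ) :=
              add_le_add degree_C_le (hha ℓ)
          _ < ((X+T:ℕ):WithBot ℕ) := by
              rw [zero_add]; exact_mod_cast by omega
    · refine lt_of_le_of_lt (degree_mul_le _ _) ?_
      refine lt_of_le_of_lt (add_le_add (degree_X_sub_C (γ ℓ)).le
        (le_trans (degree_mul_le _ _) (add_le_add (hha ℓ) (hhb ℓ)))) ?_
      calc (1 : WithBot ℕ) + (((X-1:ℕ):WithBot ℕ) + ((T-1:ℕ):WithBot ℕ))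
          = ((1 + ((X-1) + (T-1)) : ℕ) : WithBot ℕ) := by push_cast; ring
        _ < ((X+T:ℕ):WithBot ℕ) := by exact_mod_cast by omega
  have hsplit : ∀ ℓ : Fin L, h = (Polynomial.X - C (γ ℓ)) *
      ∏ ℓ' ∈ Finset.univ.erase ℓ, (Polynomial.X - C (γ ℓ')) := fun ℓ =>
    (Finset.mul_prod_erase _ _ (Finset.mem_univ ℓ)).symm
  have heq : ∑ ℓ, (C (f ℓ) + (Polynomial.X - C (γ ℓ)) * a ℓ)
          * (C (g ℓ) * (∏ ℓ' ∈ Finset.univ.erase ℓ, (Polynomial.X - C (γ ℓ')))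
              + h * b ℓ)
        = ∑ ℓ, C (f ℓ * g ℓ) * (∏ ℓ' ∈ Finset.univ.erase ℓ, (Polynomial.X - C (γ ℓ')))
            + h * c := by
    rw [hc, Finset.mul_sum, ← Finset.sum_add_distrib]
    refine Finset.sum_congr rfl fun ℓ _ => ?_
    rw [C_mul]
    conv_lhs => rw [hsplit ℓ]
    conv_rhs => rw [hsplit ℓ]
    ring
  refine ⟨⟨c, hcdeg, heq⟩, ?_⟩
  rw [heq]
  have hbd1 : (∑ ℓ, C (f ℓ * g ℓ) *
      (∏ ℓ' ∈ Finset.univ.erase ℓ, (Polynomial.X - C (γ ℓ')))).degree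
      < ((L + X + T : ℕ) : WithBot ℕ) := by
    refine lt_of_le_of_lt (degree_sum_le _ _) ?_
    rw [Finset.sup_lt_iff (by exact_mod_cast WithBot.bot_lt_coe _)]
    intro ℓ _
    refine lt_of_le_of_lt (degree_mul_le _ _) ?_
    have : (∏ ℓ' ∈ Finset.univ.erase ℓ, (Polynomial.X - C (γ ℓ'))).degree
        = ((L - 1 : ℕ) : WithBot ℕ) := by
      rw [degree_prod]
      simp [degree_X_sub_C, Finset.card_erase_of_mem]
    refine lt_of_le_of_lt (add_le_add degree_C_le this.le) ?_
    rw [zero_add]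
    exact_mod_cast by omega
  have hbd2 : (h * c).degree < ((L + X + T : ℕ) : WithBot ℕ) := by
    refine lt_of_le_of_lt (degree_mul_le _ _) ?_
    rw [hdegh]
    calc ((L:ℕ) : WithBot ℕ) + c.degree < ((L:ℕ) : WithBot ℕ) + ((X+T:ℕ) : WithBot ℕ) := by
          exact WithBot.add_lt_add_left (by exact_mod_cast WithBot.coe_ne_bot) hcdeg
      _ = ((L + X + T : ℕ) : WithBot ℕ) := by push_cast; ring
  exact lt_of_le_of_lt (degree_add_le _ _) (max_lt hbd1 hbd2)
end

section
/- (Decoding correctness of the CSA scheme over the projective line, Theorem 3.) Let F be a field, X ≥ 1, T ≥ 1, L ≥ 1, N = L + X + T. Let γ_1, …, γ_L ∈ F be pairwise distinct, set h = ∏_{ℓ=1}^{L}(x − γ_ℓ) and h_ℓ = ∏_{ℓ' ≠ ℓ}(x − γ_{ℓ'}), and let α_1, …, α_N ∈ F be pairwise distinct. Suppose f_ℓ, g_ℓ, f'_ℓ, g'_ℓ ∈ F are scalars, a_ℓ, a'_ℓ ∈ F[x] have degree < X, and b_ℓ, b'_ℓ ∈ F[x] have degree < T. Define f̂_ℓ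 = f_ℓ + (x − γ_ℓ)a_ℓ, ĝ_ℓ = g_ℓ h_ℓ + h b_ℓ, and similarly f̂'_ℓ = f'_ℓ + (x − γ_ℓ)a'_ℓ, ĝ'_ℓ = g'_ℓ h_ℓ + h b'_ℓ. If ∑_{ℓ=1}^{L} f̂_ℓ(α_n)·ĝ_ℓ(α_n) = ∑_{ℓ=1}^{L} f̂'_ℓ(α_n)·ĝ'_ℓ(α_n) for every n ∈ {1,…,N}, then f_ℓ·g_ℓ = f'_ℓ·g'_ℓ for every ℓ ∈ {1,…,L}. -/
open Polynomial Finset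

-- degree bound for one term
lemma csa_deg_term_lt {F : Type*} [Field F] {X T L : ℕ}
    (hX : 1 ≤ X) (hT : 1 ≤ T) (hL : 1 ≤ L) (γ : Fin L → F)
    (fℓ gℓ : F) (aℓ bℓ : F[X]) (hav : aℓ.degree < (X : ℕ)) (hbv : bℓ.degree < (T : ℕ))
    (ℓ : Fin L) :
    ((C fℓ + (Polynomial.X - C (γ ℓ)) * aℓ)
      * (C gℓ * (∏ ℓ' ∈ Finset.univ.erase ℓ, (Polynomial.X - C (γ ℓ')))
          + (∏ ℓ', (Polynomial.X - C (γ ℓ'))) * bℓ)).degree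
      < ((L + X + T : ℕ) : WithBot ℕ) := by
  have hdh : (∏ ℓ' : Fin L, (Polynomial.X - C (γ ℓ'))).degree = (L : WithBot ℕ) := by
    rw [degree_prod]
    simp [degree_X_sub_C]
  have hdhl : (∏ ℓ' ∈ Finset.univ.erase ℓ, (Polynomial.X - C (γ ℓ'))).degree
      = ((L - 1 : ℕ) : WithBot ℕ) := by
    rw [degree_prod]
    simp [degree_X_sub_C, Finset.card_erase_of_mem]
  have hp : (C fℓ + (Polynomial.X - C (γ ℓ)) * aℓ).degree ≤ (X : WithBot ℕ) := by
    refine le_trans (degree_add_le _ _) (max_le ?_ ?_)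
    · exact le_trans (degree_C_le) (by exact_mod_cast Nat.cast_nonneg' X)
    · rcases eq_or_ne aℓ 0 with rfl | h0
      · simp
      · rw [degree_mul, degree_X_sub_C, degree_eq_natDegree h0]
        have : aℓ.natDegree < X := by
          rwa [degree_eq_natDegree h0, Nat.cast_lt] at hav
        rw [← Nat.cast_one, ← Nat.cast_add, Nat.cast_le]
        omega
  have hq : (C gℓ * (∏ ℓ' ∈ Finset.univ.erase ℓ, (Polynomial.X - C (γ ℓ')))
      + (∏ ℓ', (Polynomial.X - C (γ ℓ'))) * bℓ).degree ≤ ((L + T - 1 : ℕ) : WithBot ℕ) := by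
    refine le_trans (degree_add_le _ _) (max_le ?_ ?_)
    · refine le_trans (degree_mul_le _ _) ?_
      refine le_trans (add_le_add degree_C_le hdhl.le) ?_
      rw [zero_add, Nat.cast_le]
      omega
    · rcases eq_or_ne bℓ 0 with rfl | h0
      · simp
      · rw [degree_mul, hdh, degree_eq_natDegree h0]
        have : bℓ.natDegree < T := by
          rwa [degree_eq_natDegree h0, Nat.cast_lt] at hbv
        rw [← Nat.cast_add, Nat.cast_le]
        omega
  refine lt_of_le_of_lt (degree_mul_le _ _) ?_
  refine lt_of_le_of_lt (add_le_add hp hq) ?_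
  rw [← Nat.cast_add, Nat.cast_lt]
  omega

-- evaluation of the sum at γ ℓ
lemma csa_eval_sum {F : Type*} [Field F] {L : ℕ} (γ : Fin L → F)
    (f g : Fin L → F) (a b : Fin L → F[X]) (ℓ : Fin L) :
    (∑ k, ((C (f k) + (Polynomial.X - C (γ k)) * a k)
      * (C (g k) * (∏ ℓ' ∈ Finset.univ.erase k, (Polynomial.X - C (γ ℓ')))
          + (∏ ℓ', (Polynomial.X - C (γ ℓ'))) * b k))).eval (γ ℓ)
    = f ℓ * (g ℓ * ∏ ℓ' ∈ Finset.univ.erase ℓ, (γ ℓ - γ ℓ')) := by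
  rw [eval_finset_sum]
  rw [Finset.sum_eq_single_of_mem ℓ (Finset.mem_univ ℓ)]
  · have hz : (∏ ℓ' : Fin L, (Polynomial.X - C (γ ℓ'))).eval (γ ℓ) = 0 := by
      rw [eval_prod]
      exact Finset.prod_eq_zero (Finset.mem_univ ℓ) (by simp)
    simp [hz, eval_prod]
  · intro k _ hk
    have hz1 : (∏ ℓ' ∈ Finset.univ.erase k, (Polynomial.X - C (γ ℓ'))).eval (γ ℓ) = 0 := by
      rw [eval_prod]
      exact Finset.prod_eq_zero (Finset.mem_erase.mpr ⟨hk.symm, Finset.mem_univ ℓ⟩) (by simp)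
    have hz : (∏ ℓ' : Fin L, (Polynomial.X - C (γ ℓ'))).eval (γ ℓ) = 0 := by
      rw [eval_prod]
      exact Finset.prod_eq_zero (Finset.mem_univ ℓ) (by simp)
    simp [hz, hz1]

/-- Decoding correctness of the CSA scheme over the projective line: with `N = L + X + T`
distinct evaluation points, if the responses (evaluations of the sum of products of shares)
of two instances agree at all `N` points, then the products `f_ℓ g_ℓ` agree. -/
theorem csa_projective_line_decoding {F : Type*} [Field F] {X T L N : ℕ}
    (hX : 1 ≤ X) (hT : 1 ≤ T) (hL : 1 ≤ L) (hN : N = L + X + T)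
    (γ : Fin L → F) (hγ : Function.Injective γ)
    (α : Fin N → F) (hα : Function.Injective α)
    (f g f' g' : Fin L → F) (a a' b b' : Fin L → F[X])
    (ha : ∀ ℓ, (a ℓ).degree < (X : ℕ)) (ha' : ∀ ℓ, (a' ℓ).degree < (X : ℕ))
    (hb : ∀ ℓ, (b ℓ).degree < (T : ℕ)) (hb' : ∀ ℓ, (b' ℓ).degree < (T : ℕ))
    (heq : ∀ n : Fin N,
      ∑ ℓ, ((C (f ℓ) + (Polynomial.X - C (γ ℓ)) * a ℓ)
          * (C (g ℓ) * (∏ ℓ' ∈ Finset.univ.erase ℓ, (Polynomial.X - C (γ ℓ')))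
              + (∏ ℓ', (Polynomial.X - C (γ ℓ'))) * b ℓ)).eval (α n)
      = ∑ ℓ, ((C (f' ℓ) + (Polynomial.X - C (γ ℓ)) * a' ℓ)
          * (C (g' ℓ) * (∏ ℓ' ∈ Finset.univ.erase ℓ, (Polynomial.X - C (γ ℓ')))
              + (∏ ℓ', (Polynomial.X - C (γ ℓ'))) * b' ℓ)).eval (α n)) :
    ∀ ℓ, f ℓ * g ℓ = f' ℓ * g' ℓ := by
  set S : F[X] := ∑ ℓ, ((C (f ℓ) + (Polynomial.X - C (γ ℓ)) * a ℓ)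
      * (C (g ℓ) * (∏ ℓ' ∈ Finset.univ.erase ℓ, (Polynomial.X - C (γ ℓ')))
          + (∏ ℓ', (Polynomial.X - C (γ ℓ'))) * b ℓ)) with hS
  set S' : F[X] := ∑ ℓ, ((C (f' ℓ) + (Polynomial.X - C (γ ℓ)) * a' ℓ)
      * (C (g' ℓ) * (∏ ℓ' ∈ Finset.univ.erase ℓ, (Polynomial.X - C (γ ℓ')))
          + (∏ ℓ', (Polynomial.X - C (γ ℓ'))) * b' ℓ)) with hS'
  have hcard : ((Finset.univ : Finset (Fin N)).card : WithBot ℕ) = ((L + X + T : ℕ) : WithBot ℕ) := by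
    simp [hN]
  have hdS : S.degree < ((Finset.univ : Finset (Fin N)).card : WithBot ℕ) := by
    rw [hcard]
    refine lt_of_le_of_lt (degree_sum_le _ _) ?_
    rw [Finset.sup_lt_iff (by exact WithBot.bot_lt_coe _)]
    intro ℓ _
    exact csa_deg_term_lt hX hT hL γ (f ℓ) (g ℓ) (a ℓ) (b ℓ) (ha ℓ) (hb ℓ) ℓ
  have hdS' : S'.degree < ((Finset.univ : Finset (Fin N)).card : WithBot ℕ) := by
    rw [hcard]
    refine lt_of_le_of_lt (degree_sum_le _ _) ?_
    rw [Finset.sup_lt_iff (by exact WithBot.bot_lt_coe _)]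
    intro ℓ _
    exact csa_deg_term_lt hX hT hL γ (f' ℓ) (g' ℓ) (a' ℓ) (b' ℓ) (ha' ℓ) (hb' ℓ) ℓ
  have hSS' : S = S' := by
    refine Polynomial.eq_of_degrees_lt_of_eval_index_eq Finset.univ (hα.injOn) hdS hdS' ?_
    intro n _
    simpa [hS, hS', eval_finset_sum] using heq n
  intro ℓ
  have hev := congrArg (fun p => Polynomial.eval (γ ℓ) p) hSS'
  simp only [hS, hS'] at hev
  rw [csa_eval_sum γ f g a b ℓ, csa_eval_sum γ f' g' a' b' ℓ] at hev
  have hc : (∏ ℓ' ∈ Finset.univ.erase ℓ, (γ ℓ - γ ℓ')) ≠ 0 := by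
    refine Finset.prod_ne_zero_iff.mpr fun ℓ' hℓ' => sub_ne_zero.mpr ?_
    exact fun h => (Finset.mem_erase.mp hℓ').1 (hγ h.symm)
  rw [← mul_assoc, ← mul_assoc] at hev
  exact mul_right_cancel₀ hc hev
end

section
/- (Star product identity for generalized Reed–Solomon codes.) Let F be a field, let α_1, …, α_n ∈ F be pairwise distinct, let k, ℓ ≥ 1, and let f, g ∈ F[x] satisfy f(α_i) ≠ 0 and g(α_i) ≠ 0 for all i. Let ev : F[x] → F^n denote the evaluation map ev(p) = (p(α_1), …, p(α_n)). Then the F-linear span of the set of coordinatewise products {ev(f·p) ⋆ ev(g·q) : deg p < k, deg q < ℓ} equals ev({f·g·r : deg r < min(k + ℓ − 1, n)}). In code language: GRS_k(α, ν) ⋆ GRS_ℓ(α, μ) = GRS_{min(k+ℓ−1, n)}(α, ν⋆μ), where ν_i = f(α_i) and μ_i = g(α_i). -/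
open Polynomial

/-- Star product identity for generalized Reed–Solomon codes:
the span of coordinatewise products of evaluation vectors of `f·p` (`deg p < k`) and
`g·q` (`deg q < ℓ`) at `n` distinct points (where `f, g` do not vanish) equals the span of
evaluation vectors of `f·g·r` with `deg r < min (k + ℓ - 1) n`; that is,
`GRS_k(α, ν) ⋆ GRS_ℓ(α, μ) = GRS_{min(k+ℓ−1,n)}(α, ν⋆μ)`. -/
theorem grs_star_product {F : Type*} [Field F] {n k l : ℕ} (hk : 1 ≤ k) (hl : 1 ≤ l)
    (α : Fin n → F) (hα : Function.Injective α)
    (f g : F[X]) (hf : ∀ i, f.eval (α i) ≠ 0) (hg : ∀ i, g.eval (α i) ≠ 0) :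
    Submodule.span F
      {v : Fin n → F | ∃ p q : F[X], p.degree < (k : ℕ) ∧ q.degree < (l : ℕ) ∧
        v = fun i => (f * p).eval (α i) * (g * q).eval (α i)}
      = Submodule.span F
      {v : Fin n → F | ∃ r : F[X], r.degree < ((min (k + l - 1) n : ℕ) : WithBot ℕ) ∧
        v = fun i => (f * g * r).eval (α i)} := by
  apply le_antisymm
  · rw [Submodule.span_le]
    rintro v ⟨p, q, hp, hq, rfl⟩
    apply Submodule.subset_span
    set V : F[X] := ∏ i : Fin n, (X - C (α i)) with hVdef
    have hVm : V.Monic := monic_prod_of_monic _ _ fun i _ => monic_X_sub_C _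
    have hVdeg : V.degree = (n : WithBot ℕ) := by
      rw [hVdef, degree_prod]
      simp
    have hpq : (p * q).degree < ((k + l - 1 : ℕ) : WithBot ℕ) := by
      rcases eq_or_ne (p * q) 0 with h0 | h0
      · rw [h0, degree_zero]
        exact WithBot.bot_lt_coe _
      · have hp0 : p ≠ 0 := fun h => h0 (by simp [h])
        have hq0 : q ≠ 0 := fun h => h0 (by simp [h])
        have h1 : p.natDegree < k := by
          rw [← Nat.cast_lt (α := WithBot ℕ), ← degree_eq_natDegree hp0]; exact hp
        have h2 : q.natDegree < l := by
          rw [← Nat.cast_lt (α := WithBot ℕ), ← degree_eq_natDegree hq0]; exact hq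
        rw [degree_eq_natDegree h0, Nat.cast_lt, natDegree_mul hp0 hq0]
        omega
    refine ⟨(p * q) %ₘ V, ?_, ?_⟩
    · rcases le_total (k + l - 1) n with h | h
      · have heq : (p * q) %ₘ V = p * q :=
          (modByMonic_eq_self_iff hVm).mpr
            (lt_of_lt_of_le hpq (by rw [hVdeg]; exact_mod_cast h))
        rw [heq, min_eq_left h]
        exact hpq
      · have hlt := degree_modByMonic_lt (p * q) hVm
        rw [hVdeg] at hlt
        rw [min_eq_right h]
        exact hlt
    · funext i
      have hV0 : V.eval (α i) = 0 := by
        rw [hVdef, eval_prod]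
        exact Finset.prod_eq_zero (Finset.mem_univ i) (by simp)
      have hmod := modByMonic_add_div (p * q) V
      have heval : ((p * q) %ₘ V).eval (α i) = (p * q).eval (α i) := by
        conv_rhs => rw [← hmod]
        simp [hV0]
      simp only [eval_mul, heval]
      ring
  · rw [Submodule.span_le]
    rintro v ⟨r, hr, rfl⟩
    have hdeg : ∀ m ∈ r.support, m ≤ k + l - 2 := by
      intro m hm
      have h1 : (m : WithBot ℕ) ≤ r.degree := le_degree_of_ne_zero (mem_support_iff.mp hm)
      have h2 : r.degree < ((k + l - 1 : ℕ) : WithBot ℕ) :=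
        lt_of_lt_of_le hr (by exact_mod_cast min_le_left _ _)
      have h3 : (m : WithBot ℕ) < ((k + l - 1 : ℕ) : WithBot ℕ) := lt_of_le_of_lt h1 h2
      have h4 : m < k + l - 1 := by exact_mod_cast h3
      omega
    have key : (fun i => (f * g * r).eval (α i)) =
        ∑ m ∈ r.support, r.coeff m •
          ((fun i => (f * X ^ (min m (k - 1))).eval (α i) *
            (g * X ^ (m - min m (k - 1))).eval (α i) : Fin n → F)) := by
      funext i
      simp only [Finset.sum_apply, Pi.smul_apply, smul_eq_mul, eval_mul, eval_pow, eval_X]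
      have hre : r.eval (α i) = ∑ m ∈ r.support, r.coeff m * α i ^ m := by
        rw [eval_eq_sum, Polynomial.sum]
      rw [hre, Finset.mul_sum]
      apply Finset.sum_congr rfl
      intro m hm
      have hsplit : (α i) ^ m = (α i) ^ (min m (k - 1)) * (α i) ^ (m - min m (k - 1)) := by
        rw [← pow_add]
        congr 1
        omega
      rw [hsplit]
      ring
    rw [key]
    apply Submodule.sum_mem
    intro m hm
    apply Submodule.smul_mem
    apply Submodule.subset_span
    refine ⟨X ^ (min m (k - 1)), X ^ (m - min m (k - 1)), ?_, ?_, rfl⟩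
    · rw [degree_X_pow, Nat.cast_lt]
      omega
    · rw [degree_X_pow, Nat.cast_lt]
      have := hdeg m hm
      omega
end

section
/- (Decoding correctness in Theorem 2: PIR from homomorphic secret sharing.) Let F be a field, N, L, M ≥ 1. For each ℓ ∈ {1,…,L}, let c_ℓ, d_ℓ ∈ F^N be vectors and let C_ℓ^noise, D_ℓ^noise ⊆ F^N be linear subspaces. Set e_ℓ = c_ℓ ⋆ d_ℓ and let E^noise ⊆ F^N be the sum over ℓ of the spans of {c_ℓ ⋆ w : w ∈ D_ℓ^noise}, {v ⋆ d_ℓ : v ∈ C_ℓ^noise}, and {v ⋆ w : v ∈ C_ℓ^noise, w ∈ D_ℓ^noise}. Assume the vectors e_1, …, e_L are linearly independent and span{e_1,…,e_L} ∩ E^noise = 0. Let μ, μ' ∈ {1,…,M}, let s, s' : {1,…,M}×{1,…,L} → F be files, and suppose the shares satisfy ŝ_{m,ℓ} − s_{m,ℓ}·c_ℓ ∈ C_ℓ^noise, ŝ'_{m,ℓ} − s'_{m,ℓ}·c_ℓ ∈ C_ℓ^noise, and the query shares satisfy q̂_{m,ℓ} − δ_{m,μ}·d_ℓ ∈ D_ℓ^noise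 and q̂'_{m,ℓ} − δ_{m,μ'}·d_ℓ ∈ D_ℓ^noise, where δ is the Kronecker delta. If the responses agree, i.e. ∑_{ℓ=1}^{L} ∑_{m=1}^{M} ŝ_{m,ℓ} ⋆ q̂_{m,ℓ} = ∑_{ℓ=1}^{L} ∑_{m=1}^{M} ŝ'_{m,ℓ} ⋆ q̂'_{m,ℓ}, then s_{μ,ℓ} = s'_{μ',ℓ} for every ℓ ∈ {1,…,L}. In particular, the desired file (s_{μ,1},…,s_{μ,L}) is uniquely determined by the response vector. -/
/-- Decoding correctness of PIR from homomorphic secret sharing (Theorem 2): if the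
information vectors `e_ℓ = c_ℓ ⋆ d_ℓ` are linearly independent and their span meets the
noise space trivially, then equal responses imply equal desired file fragments.
Here the star product on `Fin N → F` is the pointwise product. -/
theorem pir_decoding_correctness {F : Type*} [Field F] {N L M : ℕ}
    (hN : 1 ≤ N) (hL : 1 ≤ L) (hM : 1 ≤ M)
    (c d : Fin L → (Fin N → F))
    (Cnoise Dnoise : Fin L → Submodule F (Fin N → F))
    (e : Fin L → (Fin N → F)) (he : ∀ ℓ, e ℓ = c ℓ * d ℓ)
    (Enoise : Submodule F (Fin N → F))
    (hE : Enoise = ⨆ ℓ,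
      (Submodule.span F {v : Fin N → F | ∃ w ∈ Dnoise ℓ, v = c ℓ * w}
        ⊔ Submodule.span F {v : Fin N → F | ∃ w ∈ Cnoise ℓ, v = w * d ℓ}
        ⊔ Submodule.span F {v : Fin N → F | ∃ u ∈ Cnoise ℓ, ∃ w ∈ Dnoise ℓ, v = u * w}))
    (hind : LinearIndependent F e)
    (hdisj : Submodule.span F (Set.range e) ⊓ Enoise = ⊥)
    (μ μ' : Fin M) (s s' : Fin M → Fin L → F)
    (shat shat' qhat qhat' : Fin M → Fin L → (Fin N → F))
    (hs : ∀ m ℓ, shat m ℓ - s m ℓ • c ℓ ∈ Cnoise ℓ)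
    (hs' : ∀ m ℓ, shat' m ℓ - s' m ℓ • c ℓ ∈ Cnoise ℓ)
    (hq : ∀ m ℓ, qhat m ℓ - (if m = μ then (1 : F) else 0) • d ℓ ∈ Dnoise ℓ)
    (hq' : ∀ m ℓ, qhat' m ℓ - (if m = μ' then (1 : F) else 0) • d ℓ ∈ Dnoise ℓ)
    (hresp : ∑ ℓ, ∑ m, shat m ℓ * qhat m ℓ = ∑ ℓ, ∑ m, shat' m ℓ * qhat' m ℓ) :
    ∀ ℓ, s μ ℓ = s' μ' ℓ := by
  -- Key noise membership lemma
  have key : ∀ (ℓ : Fin L) (a : F) (v w : Fin N → F),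
      v ∈ Cnoise ℓ → w ∈ Dnoise ℓ → ∀ b : F,
      (a • c ℓ) * w + v * (b • d ℓ) + v * w ∈ Enoise := by
    intro ℓ a v w hv hw b
    rw [hE]
    refine Submodule.add_mem _ (Submodule.add_mem _ ?_ ?_) ?_ <;>
      refine Submodule.mem_iSup_of_mem ℓ ?_
    · refine Submodule.mem_sup_left (Submodule.mem_sup_left ?_)
      rw [smul_mul_assoc]
      exact Submodule.smul_mem _ a (Submodule.subset_span ⟨w, hw, rfl⟩)
    · refine Submodule.mem_sup_left (Submodule.mem_sup_right ?_)
      rw [mul_smul_comm]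
      exact Submodule.smul_mem _ b (Submodule.subset_span ⟨v, hv, rfl⟩)
    · exact Submodule.mem_sup_right (Submodule.subset_span ⟨v, hv, w, hw, rfl⟩)
  -- Decomposition of a response into signal plus noise
  have hdec : ∀ (sh q : Fin M → Fin L → (Fin N → F)) (sv : Fin M → Fin L → F) (ν : Fin M),
      (∀ m ℓ, sh m ℓ - sv m ℓ • c ℓ ∈ Cnoise ℓ) →
      (∀ m ℓ, q m ℓ - (if m = ν then (1 : F) else 0) • d ℓ ∈ Dnoise ℓ) →
      (∑ ℓ, ∑ m, sh m ℓ * q m ℓ) - ∑ ℓ, sv ν ℓ • e ℓ ∈ Enoise := by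
    intro sh q sv ν hsh hqv
    rw [← Finset.sum_sub_distrib]
    refine Submodule.sum_mem _ ?_
    intro ℓ _
    have hsum : sv ν ℓ • e ℓ = ∑ m, (sv m ℓ * (if m = ν then (1:F) else 0)) • e ℓ := by
      simp [mul_ite]
    rw [hsum, ← Finset.sum_sub_distrib]
    refine Submodule.sum_mem _ ?_
    intro m _
    have hid : sh m ℓ * q m ℓ - (sv m ℓ * (if m = ν then (1:F) else 0)) • e ℓ
        = (sv m ℓ • c ℓ) * (q m ℓ - (if m = ν then (1:F) else 0) • d ℓ)
          + (sh m ℓ - sv m ℓ • c ℓ) * ((if m = ν then (1:F) else 0) • d ℓ)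
          + (sh m ℓ - sv m ℓ • c ℓ) * (q m ℓ - (if m = ν then (1:F) else 0) • d ℓ) := by
      funext i
      simp only [he ℓ, Pi.add_apply, Pi.mul_apply, Pi.sub_apply, Pi.smul_apply, smul_eq_mul]
      ring
    rw [hid]
    exact key ℓ (sv m ℓ) _ _ (hsh m ℓ) (hqv m ℓ) _
  have h1 := hdec shat qhat s μ hs hq
  have h2 := hdec shat' qhat' s' μ' hs' hq'
  rw [hresp] at h1
  have hmem : (∑ ℓ, s μ ℓ • e ℓ) - ∑ ℓ, s' μ' ℓ • e ℓ ∈ Enoise := by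
    have := Submodule.sub_mem _ h2 h1
    simpa using this
  have hz : (∑ ℓ, (s μ ℓ - s' μ' ℓ) • e ℓ) = 0 := by
    have hmem2 : (∑ ℓ, (s μ ℓ - s' μ' ℓ) • e ℓ) ∈
        Submodule.span F (Set.range e) ⊓ Enoise := by
      constructor
      · refine Submodule.sum_mem _ ?_
        intro ℓ _
        exact Submodule.smul_mem _ _ (Submodule.subset_span ⟨ℓ, rfl⟩)
      · have : (∑ ℓ, (s μ ℓ - s' μ' ℓ) • e ℓ)
            = (∑ ℓ, s μ ℓ • e ℓ) - ∑ ℓ, s' μ' ℓ • e ℓ := by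
          rw [← Finset.sum_sub_distrib]
          exact Finset.sum_congr rfl fun ℓ _ => by rw [sub_smul]
        rw [this]; exact hmem
    rw [hdisj] at hmem2
    exact hmem2
  intro ℓ
  have := Fintype.linearIndependent_iff.mp hind (fun ℓ => s μ ℓ - s' μ' ℓ) hz ℓ
  exact sub_eq_zero.mp this
end
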